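/- Let y₁ > 0 > y₂ be real numbers and let x > 0. Then the three points (x, 0), (0, y₁), (0, y₂) in ℝ² are affinely independent, and the circumradius of the triangle they span equals √((x² + y₁²)(x² + y₂²)) / (2x). -/

import Mathlib

/-- A point of the Euclidean plane with given coordinates. -/
noncomputable def planePt (a b : ℝ) : EuclideanSpace ℝ (Fin 2) :=
  (WithLp.equiv 2 (Fin 2 → ℝ)).symm ![a, b]

lemma planePt_apply_zero (a b : ℝ) : planePt a b 0 = a := rfl
lemma planePt_apply_one (a b : ℝ) : planePt a b 1 = b := rfl

lemma dist_planePt (a b c d : ℝ) :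
    dist (planePt a b) (planePt c d) = Real.sqrt ((a - c) ^ 2 + (b - d) ^ 2) := by
  rw [EuclideanSpace.dist_eq]
  congr 1
  simp [Fin.sum_univ_two, planePt_apply_zero, planePt_apply_one, Real.dist_eq, sq_abs]

/-- If `y₁ > 0 > y₂` and `x > 0`, then the points `(x,0)`, `(0,y₁)`, `(0,y₂)`
are affinely independent, and the circumradius of the triangle they span equals
`√((x² + y₁²)(x² + y₂²)) / (2x)`. -/
theorem stmt4 (x y₁ y₂ : ℝ) (hy₁ : 0 < y₁) (hy₂ : y₂ < 0) (hx : 0 < x) :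
    AffineIndependent ℝ ![planePt x 0, planePt 0 y₁, planePt 0 y₂] ∧
    ∀ S : Affine.Simplex ℝ (EuclideanSpace ℝ (Fin 2)) 2,
      S.points = ![planePt x 0, planePt 0 y₁, planePt 0 y₂] →
      S.circumradius =
        Real.sqrt ((x ^ 2 + y₁ ^ 2) * (x ^ 2 + y₂ ^ 2)) / (2 * x) := by
  constructor
  · rw [affineIndependent_iff_not_collinear_set]
    intro h
    rw [collinear_iff_of_mem (Set.mem_insert _ _)] at h
    obtain ⟨v, hv⟩ := h
    obtain ⟨r₁, hr₁⟩ := hv (planePt 0 y₁) (by simp)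
    obtain ⟨r₂, hr₂⟩ := hv (planePt 0 y₂) (by simp)
    have h10 : (0 : ℝ) = r₁ * v 0 + x := congrArg (fun p : EuclideanSpace ℝ (Fin 2) => p 0) hr₁
    have h11 : y₁ = r₁ * v 1 + 0 := congrArg (fun p : EuclideanSpace ℝ (Fin 2) => p 1) hr₁
    have h20 : (0 : ℝ) = r₂ * v 0 + x := congrArg (fun p : EuclideanSpace ℝ (Fin 2) => p 0) hr₂
    have h21 : y₂ = r₂ * v 1 + 0 := congrArg (fun p : EuclideanSpace ℝ (Fin 2) => p 1) hr₂
    have e1 : y₁ = r₁ * v 1 := by linarith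
    have e2 : y₂ = r₂ * v 1 := by linarith
    have f1 : r₁ * v 0 = -x := by linarith
    have f2 : r₂ * v 0 = -x := by linarith
    have h2 : y₁ * (-x) = y₂ * (-x) := by
      calc y₁ * (-x) = (r₁ * v 1) * (r₂ * v 0) := by rw [← e1, f2]
        _ = (r₂ * v 1) * (r₁ * v 0) := by ring
        _ = y₂ * (-x) := by rw [← e2, f1]
    have : y₁ = y₂ := mul_right_cancel₀ (by linarith : (-x : ℝ) ≠ 0) h2
    linarith
  · intro S hS
    have hspan : affineSpan ℝ (Set.range S.points) = ⊤ := by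
      rw [S.independent.affineSpan_eq_top_iff_card_eq_finrank_add_one]
      simp [finrank_euclideanSpace]
    have hr : ∀ i, dist (S.points i)
        (planePt ((x ^ 2 + y₁ * y₂) / (2 * x)) ((y₁ + y₂) / 2)) =
        Real.sqrt ((x ^ 2 + y₁ ^ 2) * (x ^ 2 + y₂ ^ 2)) / (2 * x) := by
      have step : ∀ a b : ℝ, (a - (x ^ 2 + y₁ * y₂) / (2 * x)) ^ 2 + (b - (y₁ + y₂) / 2) ^ 2
          = ((x ^ 2 + y₁ ^ 2) * (x ^ 2 + y₂ ^ 2)) / (2 * x) ^ 2 →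
          dist (planePt a b) (planePt ((x ^ 2 + y₁ * y₂) / (2 * x)) ((y₁ + y₂) / 2)) =
          Real.sqrt ((x ^ 2 + y₁ ^ 2) * (x ^ 2 + y₂ ^ 2)) / (2 * x) := by
        intro a b h
        rw [dist_planePt, h, Real.sqrt_div (by positivity), Real.sqrt_sq (by positivity)]
      intro i
      rw [hS]
      fin_cases i
      · show dist (planePt x 0) _ = _
        apply step; field_simp; ring
      · show dist (planePt 0 y₁) _ = _
        apply step; field_simp; ring
      · show dist (planePt 0 y₂) _ = _
        apply step; field_simp; ring
    exact (S.eq_circumradius_of_dist_eq (hspan ▸ AffineSubspace.mem_top ℝ _ _) hr).symm
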